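/- arXiv:1706.09029 — 6 statements merged into one kernel-verified Lean document; each statement's English description precedes it below -/
import Mathlib

section
/- Let G be a graph whose edge set decomposes into a 2-factor consisting of a minimum number of vertex-disjoint cycles. If C and D are two distinct cycles of this 2-factor, x ∈ V(C) is adjacent (in G) to u ∈ V(D), then x⁺ is not adjacent to u⁺ or u⁻, and x⁻ is not adjacent to u⁺ or u⁻, where ⁺ and ⁻ denote successor and predecessor along the (oriented) cycles. -/
open SimpleGraph

variable {V : Type*}

/-- `G` has no induced `2K₂`. -/
def TwoK2Free (G : SimpleGraph V) : Prop :=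
  ¬ ∃ a b c d : V, a ≠ b ∧ a ≠ c ∧ a ≠ d ∧ b ≠ c ∧ b ≠ d ∧ c ≠ d ∧
      G.Adj a b ∧ G.Adj c d ∧ ¬G.Adj a c ∧ ¬G.Adj a d ∧ ¬G.Adj b c ∧ ¬G.Adj b d

/-- An independent set of vertices. -/
def IndepSet (G : SimpleGraph V) (s : Set V) : Prop :=
  s.Pairwise fun a b => ¬ G.Adj a b

/-- Number of connected components of `G - S`. -/
noncomputable def compCount [Fintype V] (G : SimpleGraph V) (S : Set V) : ℕ :=
  Nat.card ((G.induce Sᶜ).ConnectedComponent)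

/-- `G` is `t`-tough. -/
def Tough [Fintype V] (t : ℝ) (G : SimpleGraph V) : Prop :=
  ∀ S : Set V, 2 ≤ compCount G S → t * (compCount G S : ℝ) ≤ (S.ncard : ℝ)

/-- A family of `k` pairwise vertex-disjoint cycles in `G` covering all vertices,
i.e. the cycles of a 2-factor of `G`. -/
structure CycleFamily (G : SimpleGraph V) (k : ℕ) (n : Fin k → ℕ)
    (c : ∀ i : Fin k, ZMod (n i) → V) : Prop where
  three_le : ∀ i, 3 ≤ n i
  inj : ∀ i, Function.Injective (c i)
  adj : ∀ i j, G.Adj (c i j) (c i (j + 1))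
  disj : ∀ i i' j j', c i j = c i' j' → i = i'
  spanning : ∀ v, ∃ i j, c i j = v

/-- A vertex `v` lying on cycle `i` of the family is of A-type if it is adjacent to two
consecutive vertices of some other cycle of the family. -/
def AType {k : ℕ} {n : Fin k → ℕ} (G : SimpleGraph V)
    (c : ∀ i : Fin k, ZMod (n i) → V) (i : Fin k) (v : V) : Prop :=
  ∃ i' : Fin k, i' ≠ i ∧ ∃ j : ZMod (n i'), G.Adj v (c i' j) ∧ G.Adj v (c i' (j + 1))


/-! ### Auxiliary definitions for merging two cycles of a cycle family -/

/-- The vertex sequence of the merged cycle: first traverse cycle `i` starting at `a+1`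
and ending at `a`, then traverse cycle `i'` backwards from `b` to `b+1`. -/
def mergedCycle {V : Type*} {m : ℕ} {n : Fin (m + 1) → ℕ}
    (c : ∀ p : Fin (m + 1), ZMod (n p) → V) (i i' : Fin (m + 1))
    (a : ZMod (n i)) (b : ZMod (n i')) (s : ℕ) : V :=
  if s < n i then c i (a + 1 + (s : ZMod (n i)))
  else c i' (b - ((s - n i : ℕ) : ZMod (n i')))

/-- Lengths of the cycles in the merged family. -/
def mergeN {m : ℕ} (n : Fin (m + 1) → ℕ) (i i' : Fin (m + 1)) (j : Fin m) : ℕ :=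
  if i'.succAbove j = i then n i + n i' else n (i'.succAbove j)

/-- The merged family of cycles. -/
def mergeC {V : Type*} {m : ℕ} {n : Fin (m + 1) → ℕ}
    (c : ∀ p : Fin (m + 1), ZMod (n p) → V) (i i' : Fin (m + 1))
    (a : ZMod (n i)) (b : ZMod (n i')) (j : Fin m) (t : ZMod (mergeN n i i' j)) : V :=
  if i'.succAbove j = i then mergedCycle c i i' a b t.val
  else c (i'.succAbove j) ((t.val : ZMod (n (i'.succAbove j))))

lemma CycleFamily.merge {V : Type*} {G : SimpleGraph V} {m : ℕ} {n : Fin (m + 1) → ℕ}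
    {c : ∀ p : Fin (m + 1), ZMod (n p) → V}
    (hF : CycleFamily G (m + 1) n c) (i i' : Fin (m + 1)) (hii : i ≠ i')
    (a : ZMod (n i)) (b : ZMod (n i'))
    (hab : G.Adj (c i a) (c i' b)) (hab1 : G.Adj (c i (a + 1)) (c i' (b + 1))) :
    CycleFamily G m (mergeN n i i') (mergeC c i i' a b) := by
  have h3 := hF.three_le
  haveI instNZ : ∀ p : Fin (m + 1), NeZero (n p) := fun p => ⟨by have := h3 p; omega⟩
  have hn3 : ∀ j, 3 ≤ mergeN n i i' j := by
    intro j
    unfold mergeN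
    split
    · have := h3 i; have := h3 i'; omega
    · exact h3 _
  haveI instNZ' : ∀ j, NeZero (mergeN n i i' j) := fun j => ⟨by have := hn3 j; omega⟩
  have hval1 : ∀ j : Fin m, (1 : ZMod (mergeN n i i' j)).val = 1 := by
    intro j
    haveI : Fact (1 < mergeN n i i' j) := ⟨by have := hn3 j; omega⟩
    exact ZMod.val_one _
  have hfne : ∀ j : Fin m, i'.succAbove j ≠ i' := fun j => Fin.succAbove_ne i' j
  have hfinj : Function.Injective i'.succAbove := Fin.succAbove_right_injective
  have hNiN : n i < n i + n i' := by have := h3 i'; omega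
  have hcastm1 : ∀ (p : Fin (m + 1)), ((n p - 1 : ℕ) : ZMod (n p)) = -1 := by
    intro p
    have h0 : ((n p - 1 : ℕ) : ZMod (n p)) + ((1 : ℕ) : ZMod (n p)) = 0 := by
      rw [← Nat.cast_add, Nat.sub_add_cancel (by have := h3 p; omega), ZMod.natCast_self]
    rw [Nat.cast_one] at h0
    linear_combination h0
  constructor
  · exact hn3
  · -- injectivity
    intro j t t' h
    by_cases hj : i'.succAbove j = i
    · have hNj : mergeN n i i' j = n i + n i' := by unfold mergeN; rw [if_pos hj]
      have htv : t.val < n i + n i' := by have := ZMod.val_lt t; omega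
      have ht'v : t'.val < n i + n i' := by have := ZMod.val_lt t'; omega
      simp only [mergeC, if_pos hj, mergedCycle] at h
      apply ZMod.val_injective _
      by_cases h1 : t.val < n i <;> by_cases h2 : t'.val < n i
      · rw [if_pos h1, if_pos h2] at h
        have h5 := add_left_cancel (hF.inj i h)
        have e1 := ZMod.val_natCast_of_lt h1
        have e2 := ZMod.val_natCast_of_lt h2
        rw [← e1, ← e2, h5]
      · rw [if_pos h1, if_neg h2] at h
        exact absurd (hF.disj _ _ _ _ h) hii
      · rw [if_neg h1, if_pos h2] at h
        exact absurd (hF.disj _ _ _ _ h).symm hii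
      · rw [if_neg h1, if_neg h2] at h
        have h5 := sub_right_inj.mp (hF.inj i' h)
        have e1 := ZMod.val_natCast_of_lt (show t.val - n i < n i' by omega)
        have e2 := ZMod.val_natCast_of_lt (show t'.val - n i < n i' by omega)
        have h6 : t.val - n i = t'.val - n i := by rw [← e1, ← e2, h5]
        omega
    · have hNj : mergeN n i i' j = n (i'.succAbove j) := by unfold mergeN; rw [if_neg hj]
      have htv : t.val < n (i'.succAbove j) := by have := ZMod.val_lt t; omega
      have ht'v : t'.val < n (i'.succAbove j) := by have := ZMod.val_lt t'; omega
      simp only [mergeC, if_neg hj] at h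
      have h5 := hF.inj _ h
      apply ZMod.val_injective _
      have e1 := ZMod.val_natCast_of_lt htv
      have e2 := ZMod.val_natCast_of_lt ht'v
      rw [← e1, ← e2, h5]
  · -- adjacency
    intro j t
    by_cases hj : i'.succAbove j = i
    · have hNj : mergeN n i i' j = n i + n i' := by unfold mergeN; rw [if_pos hj]
      have htv : t.val < n i + n i' := by have := ZMod.val_lt t; omega
      have ht1 : (t + 1).val = (t.val + 1) % (n i + n i') := by
        rw [ZMod.val_add, hval1 j]
        exact congrArg (fun M => (t.val + 1) % M) hNj
      simp only [mergeC, if_pos hj]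
      rcases Nat.lt_or_ge (t.val + 1) (n i) with h1 | h1
      · -- interior of first block
        have ht1' : (t + 1).val = t.val + 1 := by
          rw [ht1, Nat.mod_eq_of_lt (by omega)]
        rw [ht1']
        simp only [mergedCycle, if_pos (show t.val < n i by omega), if_pos h1]
        have e : ((t.val + 1 : ℕ) : ZMod (n i)) = (t.val : ZMod (n i)) + 1 := by
          push_cast; ring
        rw [e, show a + 1 + ((t.val : ZMod (n i)) + 1) = a + 1 + (t.val : ZMod (n i)) + 1
          from by ring]
        exact hF.adj i _
      · rcases Nat.lt_or_ge t.val (n i) with h2 | h2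
        · -- crossing from first block to second: t.val + 1 = n i
          have h2' : t.val + 1 = n i := by omega
          have ht1' : (t + 1).val = n i := by rw [ht1, h2', Nat.mod_eq_of_lt (by omega)]
          have e1 : mergedCycle c i i' a b t.val = c i a := by
            simp only [mergedCycle, if_pos h2]
            congr 1
            have e : (t.val : ZMod (n i)) = ((n i - 1 : ℕ) : ZMod (n i)) := by
              congr 1; omega
            rw [e, hcastm1 i]; ring
          have e2 : mergedCycle c i i' a b (t + 1).val = c i' b := by
            rw [ht1']
            simp only [mergedCycle, if_neg (lt_irrefl (n i)), Nat.sub_self, Nat.cast_zero,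
              sub_zero]
          rw [e1, e2]
          exact hab
        · rcases Nat.lt_or_ge (t.val + 1) (n i + n i') with h4 | h4
          · -- interior of second block
            have ht1' : (t + 1).val = t.val + 1 := by rw [ht1, Nat.mod_eq_of_lt h4]
            rw [ht1']
            simp only [mergedCycle, if_neg (show ¬ t.val < n i by omega),
              if_neg (show ¬ t.val + 1 < n i by omega)]
            have e : ((t.val + 1 - n i : ℕ) : ZMod (n i'))
                = ((t.val - n i : ℕ) : ZMod (n i')) + 1 := by
              rw [show t.val + 1 - n i = (t.val - n i) + 1 from by omega]
              push_cast; ring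
            rw [e]
            have key := (hF.adj i' (b - ((t.val - n i : ℕ) : ZMod (n i')) - 1)).symm
            rw [show b - ((t.val - n i : ℕ) : ZMod (n i')) - 1 + 1
              = b - ((t.val - n i : ℕ) : ZMod (n i')) from by ring] at key
            rw [show b - (((t.val - n i : ℕ) : ZMod (n i')) + 1)
              = b - ((t.val - n i : ℕ) : ZMod (n i')) - 1 from by ring]
            exact key
          · -- wrap-around: t.val + 1 = n i + n i'
            have h4' : t.val + 1 = n i + n i' := by omega
            have ht1' : (t + 1).val = 0 := by rw [ht1, h4', Nat.mod_self]
            have e1 : mergedCycle c i i' a b t.val = c i' (b + 1) := by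
              simp only [mergedCycle, if_neg (show ¬ t.val < n i by omega)]
              congr 1
              have e : ((t.val - n i : ℕ) : ZMod (n i'))
                  = ((n i' - 1 : ℕ) : ZMod (n i')) := by
                congr 1; omega
              rw [e, hcastm1 i']; ring
            have e2 : mergedCycle c i i' a b (t + 1).val = c i (a + 1) := by
              rw [ht1']
              simp only [mergedCycle, if_pos (show 0 < n i by have := h3 i; omega),
                Nat.cast_zero, add_zero]
            rw [e1, e2]
            exact hab1.symm
    · have hNj : mergeN n i i' j = n (i'.succAbove j) := by unfold mergeN; rw [if_neg hj]
      simp only [mergeC, if_neg hj]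
      have e : (((t + 1).val : ℕ) : ZMod (n (i'.succAbove j)))
          = ((t.val : ℕ) : ZMod (n (i'.succAbove j))) + 1 := by
        rw [ZMod.val_add, hval1 j,
          show (t.val + 1) % mergeN n i i' j = (t.val + 1) % n (i'.succAbove j) from
            congrArg (fun M => (t.val + 1) % M) hNj,
          ZMod.natCast_mod]
        push_cast; ring
      rw [e]
      exact hF.adj _ _
  · -- disjointness
    intro j j' t t' h
    by_cases hj : i'.succAbove j = i <;> by_cases hj' : i'.succAbove j' = i
    · exact hfinj (hj.trans hj'.symm)
    · exfalso
      simp only [mergeC, if_pos hj, if_neg hj', mergedCycle] at h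
      by_cases h1 : t.val < n i
      · rw [if_pos h1] at h
        exact hj' (hF.disj _ _ _ _ h).symm
      · rw [if_neg h1] at h
        exact hfne j' (hF.disj _ _ _ _ h).symm
    · exfalso
      simp only [mergeC, if_neg hj, if_pos hj', mergedCycle] at h
      by_cases h1 : t'.val < n i
      · rw [if_pos h1] at h
        exact hj (hF.disj _ _ _ _ h)
      · rw [if_neg h1] at h
        exact hfne j (hF.disj _ _ _ _ h)
    · simp only [mergeC, if_neg hj, if_neg hj'] at h
      exact hfinj (hF.disj _ _ _ _ h)
  · -- spanning
    intro v
    obtain ⟨jm, hjm⟩ := Fin.exists_succAbove_eq hii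
    have hNm : mergeN n i i' jm = n i + n i' := by unfold mergeN; rw [if_pos hjm]
    obtain ⟨p, q, hpq⟩ := hF.spanning v
    by_cases hp : p = i
    · subst hp
      refine ⟨jm, (((q - (a + 1)).val : ℕ) : ZMod (mergeN n p i' jm)), ?_⟩
      have hs : (q - (a + 1)).val < n p := ZMod.val_lt _
      have htv : ((((q - (a + 1)).val : ℕ)) : ZMod (mergeN n p i' jm)).val
          = (q - (a + 1)).val := ZMod.val_natCast_of_lt (by rw [hNm]; omega)
      simp only [mergeC, if_pos hjm, htv, mergedCycle, if_pos hs, ZMod.natCast_zmod_val]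
      rw [show a + 1 + (q - (a + 1)) = q from by ring]
      exact hpq
    · by_cases hp' : p = i'
      · subst hp'
        refine ⟨jm, ((n i + (b - q).val : ℕ) : ZMod (mergeN n i p jm)), ?_⟩
        have hs : (b - q).val < n p := ZMod.val_lt _
        have htv : (((n i + (b - q).val : ℕ)) : ZMod (mergeN n i p jm)).val
            = n i + (b - q).val := ZMod.val_natCast_of_lt (by rw [hNm]; omega)
        simp only [mergeC, if_pos hjm, htv, mergedCycle,
          if_neg (show ¬ n i + (b - q).val < n i by omega), Nat.add_sub_cancel_left,
          ZMod.natCast_zmod_val]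
        rw [show b - (b - q) = q from by ring]
        exact hpq
      · obtain ⟨z, hz⟩ := Fin.exists_succAbove_eq (show p ≠ i' from hp')
        subst hz
        refine ⟨z, ((q.val : ℕ) : ZMod (mergeN n i i' z)), ?_⟩
        have hNz : mergeN n i i' z = n (i'.succAbove z) := by unfold mergeN; rw [if_neg hp]
        have htv : (((q.val : ℕ)) : ZMod (mergeN n i i' z)).val = q.val :=
          ZMod.val_natCast_of_lt (by rw [hNz]; exact ZMod.val_lt q)
        simp only [mergeC, if_neg hp, htv, ZMod.natCast_zmod_val]
        exact hpq

/-- Reversing the orientation of one cycle of a cycle family. -/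
lemma CycleFamily.reverse {V : Type*} {G : SimpleGraph V} {k : ℕ} {n : Fin k → ℕ}
    {c : ∀ p : Fin k, ZMod (n p) → V} (hF : CycleFamily G k n c) (i₀ : Fin k) :
    CycleFamily G k n (fun p j => c p (if p = i₀ then -j else j)) := by
  constructor
  · exact hF.three_le
  · intro p t t' h
    by_cases hp : p = i₀
    · simp only [if_pos hp] at h
      exact neg_injective (hF.inj p h)
    · simp only [if_neg hp] at h
      exact hF.inj p h
  · intro p j
    by_cases hp : p = i₀
    · simp only [if_pos hp]
      have key := (hF.adj p (-(j + 1))).symm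
      rw [show -(j + 1) + 1 = -j from by ring] at key
      exact key
    · simp only [if_neg hp]
      exact hF.adj p j
  · intro p p' j j' h
    exact hF.disj _ _ _ _ h
  · intro v
    obtain ⟨p, j, hpj⟩ := hF.spanning v
    refine ⟨p, if p = i₀ then -j else j, ?_⟩
    by_cases hp : p = i₀
    · subst hp
      simpa using hpj
    · simp only [if_neg hp]
      exact hpj

theorem nonadjacency_min_two_factor (G : SimpleGraph V)
    (k : ℕ) (n : Fin k → ℕ) (c : ∀ i : Fin k, ZMod (n i) → V)
    (hF : CycleFamily G k n c)
    (hmin : ∀ (k' : ℕ) (n' : Fin k' → ℕ) (c' : ∀ i : Fin k', ZMod (n' i) → V),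
      CycleFamily G k' n' c' → k ≤ k')
    (iC iD : Fin k) (hne : iC ≠ iD) (x : ZMod (n iC)) (u : ZMod (n iD))
    (hxu : G.Adj (c iC x) (c iD u)) :
    ¬ G.Adj (c iC (x + 1)) (c iD (u + 1)) ∧ ¬ G.Adj (c iC (x + 1)) (c iD (u - 1)) ∧
      ¬ G.Adj (c iC (x - 1)) (c iD (u + 1)) ∧ ¬ G.Adj (c iC (x - 1)) (c iD (u - 1)) := by
  obtain ⟨m, rfl⟩ : ∃ m, k = m + 1 := ⟨k - 1, by have := iC.pos; omega⟩
  have key : ∀ (c₂ : ∀ p : Fin (m + 1), ZMod (n p) → V), CycleFamily G (m + 1) n c₂ →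
      ∀ (a : ZMod (n iC)) (b : ZMod (n iD)), G.Adj (c₂ iC a) (c₂ iD b) →
      G.Adj (c₂ iC (a + 1)) (c₂ iD (b + 1)) → False := by
    intro c₂ hF₂ a b h1 h2
    have hF' := hF₂.merge iC iD hne a b h1 h2
    have := hmin m _ _ hF'
    omega
  refine ⟨fun h => key c hF x u hxu h, fun h => ?_, fun h => ?_, fun h => ?_⟩
  · refine key _ (hF.reverse iD) x (-u) ?_ ?_
    · show G.Adj (c iC (if iC = iD then -x else x)) (c iD (if iD = iD then -(-u) else -u))
      rw [if_neg hne, if_pos rfl, neg_neg]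
      exact hxu
    · show G.Adj (c iC (if iC = iD then -(x + 1) else x + 1))
        (c iD (if iD = iD then -(-u + 1) else -u + 1))
      rw [if_neg hne, if_pos rfl, show -(-u + 1) = u - 1 from by ring]
      exact h
  · refine key _ (hF.reverse iD) (x - 1) (-(u + 1)) ?_ ?_
    · show G.Adj (c iC (if iC = iD then -(x - 1) else x - 1))
        (c iD (if iD = iD then -(-(u + 1)) else -(u + 1)))
      rw [if_neg hne, if_pos rfl, neg_neg]
      exact h
    · show G.Adj (c iC (if iC = iD then -(x - 1 + 1) else x - 1 + 1))
        (c iD (if iD = iD then -(-(u + 1) + 1) else -(u + 1) + 1))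
      rw [if_neg hne, if_pos rfl, show x - 1 + 1 = x from by ring,
        show -(-(u + 1) + 1) = u from by ring]
      exact hxu
  · refine key c hF (x - 1) (u - 1) h ?_
    rw [show x - 1 + 1 = x from by ring, show u - 1 + 1 = u from by ring]
    exact hxu
end

section
/- Let G be a graph with a minimum 2-factor F whose cycles have at least two members, and suppose G is 2K2-free. Then no cycle of F contains an edge both of whose endpoints are A-type vertices. -/
open SimpleGraph

variable {V : Type*}

namespace NAE

lemma get_congr (l : List V) {a b : ℕ} (ha : a < l.length) (h : a = b) :
    l.get ⟨a, ha⟩ = l.get ⟨b, h ▸ ha⟩ := by subst h; rfl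

lemma two_k2 {G : SimpleGraph V} (h : TwoK2Free G) {a b u v : V}
    (hab : G.Adj a b) (huv : G.Adj u v)
    (hau : a ≠ u) (hav : a ≠ v) (hbu : b ≠ u) (hbv : b ≠ v) :
    G.Adj a u ∨ G.Adj a v ∨ G.Adj b u ∨ G.Adj b v := by
  by_contra hcon
  push_neg at hcon
  exact h ⟨a, b, u, v, hab.ne, hau, hav, hbu, hbv, huv.ne, hab, huv,
    hcon.1, hcon.2.1, hcon.2.2.1, hcon.2.2.2⟩

section PosList

variable {k : ℕ} {n : Fin k → ℕ} (c : ∀ i : Fin k, ZMod (n i) → V)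

def posList (d : Fin k) (σ : ℕ → ZMod (n d)) : List V :=
  (List.range (n d)).map fun t => c d (σ t)

variable {c}
variable {G : SimpleGraph V} {d : Fin k} {σ : ℕ → ZMod (n d)}

@[simp] lemma posList_length : (posList c d σ).length = n d := by simp [posList]

lemma posList_ne_nil (h : 0 < n d) : posList c d σ ≠ [] := by
  rw [← List.length_pos_iff]; simpa using h

lemma posList_get (t : ℕ) (ht : t < (posList c d σ).length) :
    (posList c d σ).get ⟨t, ht⟩ = c d (σ t) := by
  simp [posList]

lemma posList_head (h : posList c d σ ≠ []) : (posList c d σ).head h = c d (σ 0) := by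
  have h0 : 0 < (posList c d σ).length := List.length_pos_iff.mpr h
  rw [← List.get_mk_zero h0, posList_get]

lemma posList_getLast (h : posList c d σ ≠ []) :
    (posList c d σ).getLast h = c d (σ (n d - 1)) := by
  rw [List.getLast_eq_getElem]
  show (posList c d σ).get ⟨_, _⟩ = _
  rw [posList_get]
  congr 1
  simp

lemma posList_chain' (hσ : ∀ t, t + 1 < n d → G.Adj (c d (σ t)) (c d (σ (t + 1)))) :
    (posList c d σ).Chain' G.Adj := by
  refine List.isChain_iff_getElem.mpr ?_
  intro t ht
  show G.Adj ((posList c d σ).get ⟨t, _⟩) ((posList c d σ).get ⟨t + 1, _⟩)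
  rw [posList_get, posList_get]
  have ht' : t < n d - 1 := by simp at ht; omega
  exact hσ t (by omega)

lemma posList_nodup (hc : Function.Injective (c d))
    (hσ : ∀ t < n d, ∀ t' < n d, σ t = σ t' → t = t') :
    (posList c d σ).Nodup := by
  rw [List.nodup_iff_injective_get]
  rintro ⟨a, ha⟩ ⟨b, hb⟩ hab
  rw [posList_get, posList_get] at hab
  have ha' : a < n d := by simpa using ha
  have hb' : b < n d := by simpa using hb
  exact Fin.ext (hσ a ha' b hb' (hc hab))

lemma posList_mem [NeZero (n d)]
    (hσ : ∀ t < n d, ∀ t' < n d, σ t = σ t' → t = t') :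
    ∀ v, v ∈ posList c d σ ↔ ∃ jd, c d jd = v := by
  have hsurj : ∀ jd : ZMod (n d), ∃ t < n d, σ t = jd := by
    have e : Fin (n d) ≃ ZMod (n d) :=
      Fintype.equivOfCardEq (by simp [ZMod.card])
    have hinj : Function.Injective (fun t : Fin (n d) => σ t.1) := by
      rintro ⟨a, ha⟩ ⟨b, hb⟩ h
      exact Fin.ext (hσ a ha b hb h)
    intro jd
    obtain ⟨⟨t, ht⟩, h⟩ := hinj.surjective_of_finite e jd
    exact ⟨t, ht, h⟩
  intro v
  constructor
  · intro hv
    obtain ⟨t, _, h⟩ := List.mem_map.mp hv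
    exact ⟨σ t, h⟩
  · rintro ⟨jd, rfl⟩
    obtain ⟨t, ht, rfl⟩ := hsurj jd
    exact List.mem_map.mpr ⟨t, List.mem_range.mpr ht, rfl⟩

end PosList

section MergeContra

variable {G : SimpleGraph V} {k : ℕ} {n : Fin k → ℕ} {c : ∀ i : Fin k, ZMod (n i) → V}

lemma merge_contra (hF : CycleFamily G k n c)
    (hmin : ∀ (k' : ℕ) (n' : Fin k' → ℕ) (c' : ∀ i : Fin k', ZMod (n' i) → V),
      CycleFamily G k' n' c' → k ≤ k')
    (m : ℕ) (hm : 2 ≤ m) (g : Fin m → Fin k) (hg : Function.Injective g)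
    (L : List V) (hlen : 3 ≤ L.length)
    (hnd : L.Nodup) (hch : L.Chain' G.Adj)
    (hne : L ≠ [])
    (hcl : G.Adj (L.getLast hne) (L.head hne))
    (hmem : ∀ (t : Fin m) (jd : ZMod (n (g t))), c (g t) jd ∈ L)
    (hmem' : ∀ v ∈ L, ∃ (t : Fin m) (jd : ZMod (n (g t))), c (g t) jd = v) : False := by
  classical
  haveI hNZ : NeZero L.length := ⟨by omega⟩
  haveI : Fact (1 < L.length) := ⟨by omega⟩
  set s : Finset (Fin k) := (Finset.univ.image g)ᶜ with hs
  have hscard : s.card = k - m := by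
    rw [hs, Finset.card_compl, Finset.card_image_of_injective _ hg]
    simp
  have hsmem : ∀ i : Fin k, i ∈ s ↔ ∀ t, g t ≠ i := by
    intro i
    simp [hs, eq_comm]
  set φ : Fin s.card ≃ {x // x ∈ s} := s.equivFin.symm with hφ
  set c0 : ZMod L.length → V := fun jz => L.get ⟨jz.val, ZMod.val_lt jz⟩ with hc0
  set n' : Fin (s.card + 1) → ℕ := Fin.cons L.length (fun t => n (φ t).1) with hn'
  set c' : ∀ i' : Fin (s.card + 1), ZMod (n' i') → V :=
    Fin.cons (α := fun i' => ZMod (n' i') → V) c0 (fun t => c (φ t).1) with hc'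
  have hc'0 : ∀ jz : ZMod L.length, c' 0 jz = c0 jz := fun _ => rfl
  have hc's : ∀ (t : Fin s.card) (jz : ZMod (n (φ t).1)), c' t.succ jz = c (φ t).1 jz :=
    fun _ _ => rfl
  have fam : CycleFamily G (s.card + 1) n' c' := by
    constructor
    · intro i'
      obtain rfl | ⟨t, rfl⟩ := i'.eq_zero_or_eq_succ
      · exact hlen
      · exact hF.three_le _
    · intro i'
      obtain rfl | ⟨t, rfl⟩ := i'.eq_zero_or_eq_succ
      · show Function.Injective c0
        intro a b hab
        have hab' : L.get ⟨a.val, ZMod.val_lt a⟩ = L.get ⟨b.val, ZMod.val_lt b⟩ := hab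
        have h2 := (hnd.get_inj_iff).mp hab'
        have h3 : a.val = b.val := congrArg Fin.val h2
        exact ZMod.val_injective _ h3
      · exact hF.inj _
    · intro i'
      obtain rfl | ⟨t, rfl⟩ := i'.eq_zero_or_eq_succ
      · show ∀ jz : ZMod L.length, G.Adj (c0 jz) (c0 (jz + 1))
        intro jz
        show G.Adj (L.get ⟨jz.val, ZMod.val_lt jz⟩) (L.get ⟨(jz + 1).val, ZMod.val_lt _⟩)
        have hv : (jz + 1).val = (jz.val + 1) % L.length := by
          rw [ZMod.val_add, ZMod.val_one]
        have hjlt := ZMod.val_lt jz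
        by_cases hlt : jz.val + 1 < L.length
        · have h1 : (jz + 1).val = jz.val + 1 := by rw [hv, Nat.mod_eq_of_lt hlt]
          rw [get_congr L (ZMod.val_lt (jz+1)) h1]
          exact List.isChain_iff_getElem.mp hch jz.val (by omega)
        · have h1 : (jz + 1).val = 0 := by
            rw [hv]
            have h2 : jz.val + 1 = L.length := by omega
            simp [h2]
          have h2 : jz.val = L.length - 1 := by omega
          rw [get_congr L (ZMod.val_lt (jz+1)) h1, get_congr L (ZMod.val_lt jz) h2]
          have e1 : L.getLast hne = L.get ⟨L.length - 1, by omega⟩ := List.getLast_eq_getElem hne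
          have e2 : L.head hne = L.get ⟨0, by omega⟩ := (List.get_mk_zero (by omega)).symm
          rw [e2, e1] at hcl
          exact hcl
      · intro jz
        exact hF.adj _ _
    · intro i1 i2 j1 j2 h
      obtain rfl | ⟨t1, rfl⟩ := i1.eq_zero_or_eq_succ <;>
        obtain rfl | ⟨t2, rfl⟩ := i2.eq_zero_or_eq_succ
      · rfl
      · exfalso
        have h := (hc'0 j1).symm.trans (h.trans (hc's t2 j2))
        have hL : c0 j1 ∈ L := List.get_mem _ _
        obtain ⟨t0, jd0, h0⟩ := hmem' _ hL
        have hgt : g t0 = (φ t2).1 := hF.disj _ _ _ _ (h0.trans h)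
        exact ((hsmem _).mp (φ t2).2 t0) hgt
      · exfalso
        have h := (hc's t1 j1).symm.trans (h.trans (hc'0 j2))
        have hL : c0 j2 ∈ L := List.get_mem _ _
        obtain ⟨t0, jd0, h0⟩ := hmem' _ hL
        have hgt : g t0 = (φ t1).1 := hF.disj _ _ _ _ (h0.trans h.symm)
        exact ((hsmem _).mp (φ t1).2 t0) hgt
      · have h := (hc's t1 j1).symm.trans (h.trans (hc's t2 j2))
        have h12 : (φ t1).1 = (φ t2).1 := hF.disj _ _ _ _ h
        have ht : t1 = t2 := φ.injective (Subtype.ext h12)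
        rw [ht]
    · intro v
      obtain ⟨i0, j0, hv⟩ := hF.spanning v
      by_cases hr : ∃ t, g t = i0
      · obtain ⟨t, rfl⟩ := hr
        have hvL : v ∈ L := hv ▸ hmem t j0
        obtain ⟨⟨pos, hpos⟩, hget⟩ := List.mem_iff_get.mp hvL
        refine ⟨0, ((pos : ℕ) : ZMod L.length), ?_⟩
        show L.get ⟨((pos : ℕ) : ZMod L.length).val, ZMod.val_lt _⟩ = v
        rw [get_congr L (ZMod.val_lt _) (ZMod.val_cast_of_lt hpos)]
        exact hget
      · push_neg at hr
        have hi0 : i0 ∈ s := (hsmem i0).mpr hr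
        obtain ⟨t, ht⟩ : ∃ t : Fin s.card, (φ t).1 = i0 := ⟨φ.symm ⟨i0, hi0⟩, by simp⟩
        subst ht
        exact ⟨t.succ, j0, hv⟩
  have hk' := hmin _ _ _ fam
  have hmk : m ≤ k := by
    have := Fintype.card_le_of_injective g hg
    simpa using this
  omega

end MergeContra

section Sigma

lemma castNsub1 (N : ℕ) (h : 1 ≤ N) : ((N - 1 : ℕ) : ZMod N) = -1 := by
  rw [Nat.cast_sub h]
  simp

lemma cast_inj_lt {N : ℕ} {a b : ℕ} (ha : a < N) (hb : b < N)
    (h : (a : ZMod N) = b) : a = b := by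
  have := congrArg ZMod.val h
  rwa [ZMod.val_cast_of_lt ha, ZMod.val_cast_of_lt hb] at this

variable {G : SimpleGraph V} {k : ℕ} {n : Fin k → ℕ} {c : ∀ i : Fin k, ZMod (n i) → V}

lemma sfwd_inj (d : Fin k) (b : ZMod (n d)) :
    ∀ t < n d, ∀ t' < n d, b + (t : ZMod (n d)) = b + (t' : ZMod (n d)) → t = t' := by
  intro t ht t' ht' h
  exact cast_inj_lt ht ht' (add_left_cancel h)

lemma sbwd_inj (d : Fin k) (b : ZMod (n d)) :
    ∀ t < n d, ∀ t' < n d, b - (t : ZMod (n d)) = b - (t' : ZMod (n d)) → t = t' := by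
  intro t ht t' ht' h
  have h2 : (t : ZMod (n d)) = t' := by
    have h3 := sub_right_injective h
    exact h3
  exact cast_inj_lt ht ht' h2

lemma sfwd_adj (hF : CycleFamily G k n c) (d : Fin k) (b : ZMod (n d)) :
    ∀ t, t + 1 < n d → G.Adj (c d (b + (t : ZMod (n d)))) (c d (b + ((t + 1 : ℕ) : ZMod (n d)))) := by
  intro t _
  have h1 : b + ((t + 1 : ℕ) : ZMod (n d)) = (b + (t : ZMod (n d))) + 1 := by
    push_cast
    ring
  rw [h1]
  exact hF.adj d _

lemma sbwd_adj (hF : CycleFamily G k n c) (d : Fin k) (b : ZMod (n d)) :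
    ∀ t, t + 1 < n d → G.Adj (c d (b - (t : ZMod (n d)))) (c d (b - ((t + 1 : ℕ) : ZMod (n d)))) := by
  intro t _
  have h1 : (b - ((t + 1 : ℕ) : ZMod (n d))) + 1 = b - (t : ZMod (n d)) := by
    push_cast
    ring
  have := hF.adj d (b - ((t + 1 : ℕ) : ZMod (n d)))
  rw [h1] at this
  exact this.symm

lemma sfwd_last (d : Fin k) (b : ZMod (n d)) (h : 1 ≤ n d) :
    b + ((n d - 1 : ℕ) : ZMod (n d)) = b - 1 := by
  rw [castNsub1 _ h]
  ring

lemma sbwd_last (d : Fin k) (b : ZMod (n d)) (h : 1 ≤ n d) :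
    b - ((n d - 1 : ℕ) : ZMod (n d)) = b + 1 := by
  rw [castNsub1 _ h]
  ring

end Sigma

section STwo

variable {G : SimpleGraph V} {k : ℕ} {n : Fin k → ℕ} {c : ∀ i : Fin k, ZMod (n i) → V}

def stwo {k : ℕ} {n : Fin k → ℕ} (d : Fin k) (b : ZMod (n d)) (ℓ1 : ℕ) : ℕ → ZMod (n d) :=
  fun t => if t < ℓ1 then b + (t : ZMod (n d)) else b - 1 - ((t - ℓ1 : ℕ) : ZMod (n d))

lemma cast_key {N : ℕ} (hN : 1 ≤ N) (e : ℕ) (he : e ≤ N - 1) :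
    ((e : ℕ) : ZMod N) = -1 - ((N - 1 - e : ℕ) : ZMod N) := by
  have h3 : ((N - 1 - e : ℕ) : ZMod N) = ((N - 1 : ℕ) : ZMod N) - e := by
    rw [Nat.cast_sub he]
  rw [h3, castNsub1 _ hN]
  ring

lemma stwo_inj (d : Fin k) (b : ZMod (n d)) (ℓ1 : ℕ) (h1 : 1 ≤ ℓ1) (h2 : ℓ1 ≤ n d - 1)
    (hN : 1 ≤ n d) :
    ∀ t < n d, ∀ t' < n d, stwo d b ℓ1 t = stwo d b ℓ1 t' → t = t' := by
  intro t ht t' ht' h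
  unfold stwo at h
  by_cases ct : t < ℓ1
  · by_cases ct' : t' < ℓ1
    · rw [if_pos ct, if_pos ct'] at h
      exact cast_inj_lt ht ht' (add_left_cancel h)
    · exfalso
      rw [if_pos ct, if_neg ct'] at h
      rw [cast_key hN (t' - ℓ1) (by omega)] at h
      have h4 : b - 1 - (-1 - ((n d - 1 - (t' - ℓ1) : ℕ) : ZMod (n d)))
          = b + ((n d - 1 - (t' - ℓ1) : ℕ) : ZMod (n d)) := by ring
      rw [h4] at h
      have h5 := cast_inj_lt ht (by omega) (add_left_cancel h)
      omega
  · by_cases ct' : t' < ℓ1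
    · exfalso
      rw [if_neg ct, if_pos ct'] at h
      rw [cast_key hN (t - ℓ1) (by omega)] at h
      have h4 : b - 1 - (-1 - ((n d - 1 - (t - ℓ1) : ℕ) : ZMod (n d)))
          = b + ((n d - 1 - (t - ℓ1) : ℕ) : ZMod (n d)) := by ring
      rw [h4] at h
      have h5 := cast_inj_lt (show n d - 1 - (t - ℓ1) < n d by omega) ht' (add_left_cancel h)
      omega
    · rw [if_neg ct, if_neg ct'] at h
      have h5 := cast_inj_lt (show t - ℓ1 < n d by omega) (show t' - ℓ1 < n d by omega)
        (sub_right_injective h)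
      omega

lemma stwo_adj (hF : CycleFamily G k n c) (d : Fin k) (b : ZMod (n d)) (ℓ1 : ℕ)
    (h1 : 1 ≤ ℓ1) (h2 : ℓ1 ≤ n d - 1)
    (hseam : G.Adj (c d (b + ((ℓ1 - 1 : ℕ) : ZMod (n d)))) (c d (b - 1))) :
    ∀ t, t + 1 < n d → G.Adj (c d (stwo d b ℓ1 t)) (c d (stwo d b ℓ1 (t + 1))) := by
  intro t ht
  unfold stwo
  by_cases c1 : t + 1 < ℓ1
  · rw [if_pos (by omega), if_pos c1]
    exact sfwd_adj hF d b t ht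
  · by_cases c2 : t < ℓ1
    · rw [if_pos c2, if_neg c1]
      have e1 : t = ℓ1 - 1 := by omega
      have e2 : t + 1 - ℓ1 = 0 := by omega
      rw [e2, e1]
      simpa using hseam
    · rw [if_neg c2, if_neg c1]
      have e3 : t + 1 - ℓ1 = (t - ℓ1) + 1 := by omega
      rw [e3]
      exact sbwd_adj hF d (b - 1) (t - ℓ1) (by omega)

lemma stwo_zero (d : Fin k) (b : ZMod (n d)) (ℓ1 : ℕ) (h1 : 1 ≤ ℓ1) :
    stwo d b ℓ1 0 = b := by
  unfold stwo
  rw [if_pos (by omega)]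
  simp

lemma stwo_last (d : Fin k) (b : ZMod (n d)) (ℓ1 : ℕ) (h1 : 1 ≤ ℓ1) (h2 : ℓ1 ≤ n d - 1)
    (hN : 1 ≤ n d) :
    stwo d b ℓ1 (n d - 1) = b + (ℓ1 : ZMod (n d)) := by
  unfold stwo
  rw [if_neg (by omega)]
  have h3 : ((n d - 1 - ℓ1 : ℕ) : ZMod (n d)) = ((n d - 1 : ℕ) : ZMod (n d)) - ℓ1 := by
    rw [Nat.cast_sub h2]
  rw [h3, castNsub1 _ hN]
  ring

end STwo

section Wrappers

variable {G : SimpleGraph V} {k : ℕ} {n : Fin k → ℕ} {c : ∀ i : Fin k, ZMod (n i) → V}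

lemma twomerge (hF : CycleFamily G k n c)
    (hmin : ∀ (k' : ℕ) (n' : Fin k' → ℕ) (c' : ∀ i : Fin k', ZMod (n' i) → V),
      CycleFamily G k' n' c' → k ≤ k')
    (i : Fin k) (j : ZMod (n i)) (d : Fin k) (hdi : d ≠ i) (σ : ℕ → ZMod (n d))
    (hσadj : ∀ t, t + 1 < n d → G.Adj (c d (σ t)) (c d (σ (t + 1))))
    (hσinj : ∀ t < n d, ∀ t' < n d, σ t = σ t' → t = t')
    (hentry : G.Adj (c i j) (c d (σ 0)))
    (hexit : G.Adj (c d (σ (n d - 1))) (c i (j + 1))) : False := by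
  classical
  have h3i := hF.three_le i
  have h3d := hF.three_le d
  haveI : NeZero (n i) := ⟨by omega⟩
  haveI : NeZero (n d) := ⟨by omega⟩
  set σC : ℕ → ZMod (n i) := fun t => (j + 1) + (t : ZMod (n i)) with hσC
  set LC := posList c i σC with hLC
  set LD := posList c d σ with hLD
  have hCne : LC ≠ [] := posList_ne_nil (by omega)
  have hDne : LD ≠ [] := posList_ne_nil (by omega)
  have hLne : LC ++ LD ≠ [] := by simp [hCne]
  have hCinj : ∀ t < n i, ∀ t' < n i, σC t = σC t' → t = t' := sfwd_inj i (j + 1)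
  have hmemC : ∀ v, v ∈ LC ↔ ∃ jj, c i jj = v := posList_mem hCinj
  have hmemD : ∀ v, v ∈ LD ↔ ∃ jd, c d jd = v := posList_mem hσinj
  have hClast : LC.getLast hCne = c i j := by
    refine (posList_getLast hCne).trans ?_
    show c i ((j + 1) + ((n i - 1 : ℕ) : ZMod (n i))) = c i j
    rw [castNsub1 _ (by omega)]
    norm_num
  have hChead : LC.head hCne = c i (j + 1) := by
    refine (posList_head hCne).trans ?_
    show c i ((j + 1) + ((0 : ℕ) : ZMod (n i))) = c i (j + 1)
    norm_num
  have hDhead : LD.head hDne = c d (σ 0) := posList_head _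
  have hDlast : LD.getLast hDne = c d (σ (n d - 1)) := posList_getLast _
  have hdisj : LC.Disjoint LD := by
    intro a haC haD
    obtain ⟨jj, hj⟩ := (hmemC a).mp haC
    obtain ⟨jd, hd2⟩ := (hmemD a).mp haD
    exact hdi (hF.disj d i jd jj (hd2.trans hj.symm))
  refine merge_contra hF hmin 2 le_rfl ![i, d] ?_ (LC ++ LD) ?_ ?_ ?_ hLne ?_ ?_ ?_
  · intro a b hab
    exact match a, b, hab with
    | 0, 0, _ => rfl
    | 0, 1, hab => absurd (show i = d from hab).symm hdi
    | 1, 0, hab => absurd (show d = i from hab) hdi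
    | 1, 1, _ => rfl
  · have : (LC ++ LD).length = n i + n d := by simp [hLC, hLD]
    omega
  · exact List.nodup_append'.mpr ⟨posList_nodup (hF.inj i) hCinj,
      posList_nodup (hF.inj d) hσinj, hdisj⟩
  · refine List.isChain_append.mpr ⟨posList_chain' (sfwd_adj hF i (j + 1)),
      posList_chain' hσadj, ?_⟩
    intro x hx y hy
    rw [List.getLast?_eq_getLast hCne] at hx
    rw [List.head?_eq_head hDne] at hy
    simp only [Option.mem_some_iff] at hx hy
    subst hx; subst hy
    rw [hClast, hDhead]
    exact hentry
  · have e1 : (LC ++ LD).getLast hLne = LD.getLast hDne := by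
      rw [List.getLast_append]
      simp [hDne]
    have e2 : (LC ++ LD).head hLne = LC.head hCne := by
      rw [List.head_append]
      simp [hCne]
    rw [e1, e2, hDlast, hChead]
    exact hexit
  · intro t jd
    fin_cases t
    · exact List.mem_append_left _ ((hmemC _).mpr ⟨jd, rfl⟩)
    · exact List.mem_append_right _ ((hmemD _).mpr ⟨jd, rfl⟩)
  · intro v hv
    rcases List.mem_append.mp hv with h | h
    · obtain ⟨jj, hj⟩ := (hmemC v).mp h
      exact ⟨0, jj, hj⟩
    · obtain ⟨jd, hd2⟩ := (hmemD v).mp h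
      exact ⟨1, jd, hd2⟩

lemma threemerge (hF : CycleFamily G k n c)
    (hmin : ∀ (k' : ℕ) (n' : Fin k' → ℕ) (c' : ∀ i : Fin k', ZMod (n' i) → V),
      CycleFamily G k' n' c' → k ≤ k')
    (i : Fin k) (j : ZMod (n i)) (d1 d2 : Fin k) (hd1i : d1 ≠ i) (hd2i : d2 ≠ i)
    (hd12 : d1 ≠ d2)
    (σ1 : ℕ → ZMod (n d1)) (σ2 : ℕ → ZMod (n d2))
    (hσ1adj : ∀ t, t + 1 < n d1 → G.Adj (c d1 (σ1 t)) (c d1 (σ1 (t + 1))))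
    (hσ1inj : ∀ t < n d1, ∀ t' < n d1, σ1 t = σ1 t' → t = t')
    (hσ2adj : ∀ t, t + 1 < n d2 → G.Adj (c d2 (σ2 t)) (c d2 (σ2 (t + 1))))
    (hσ2inj : ∀ t < n d2, ∀ t' < n d2, σ2 t = σ2 t' → t = t')
    (hentry : G.Adj (c i j) (c d1 (σ1 0)))
    (hseam : G.Adj (c d1 (σ1 (n d1 - 1))) (c d2 (σ2 0)))
    (hexit : G.Adj (c d2 (σ2 (n d2 - 1))) (c i (j + 1))) : False := by
  classical
  have h3i := hF.three_le i
  have h3d1 := hF.three_le d1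
  have h3d2 := hF.three_le d2
  haveI : NeZero (n i) := ⟨by omega⟩
  haveI : NeZero (n d1) := ⟨by omega⟩
  haveI : NeZero (n d2) := ⟨by omega⟩
  set σC : ℕ → ZMod (n i) := fun t => (j + 1) + (t : ZMod (n i)) with hσC
  set LC := posList c i σC with hLC
  set L1 := posList c d1 σ1 with hL1
  set L2 := posList c d2 σ2 with hL2
  have hCne : LC ≠ [] := posList_ne_nil (by omega)
  have h1ne : L1 ≠ [] := posList_ne_nil (by omega)
  have h2ne : L2 ≠ [] := posList_ne_nil (by omega)
  have h12ne : L1 ++ L2 ≠ [] := by simp [h1ne]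
  have hLne : LC ++ (L1 ++ L2) ≠ [] := by simp [hCne]
  have hCinj : ∀ t < n i, ∀ t' < n i, σC t = σC t' → t = t' := sfwd_inj i (j + 1)
  have hmemC : ∀ v, v ∈ LC ↔ ∃ jj, c i jj = v := posList_mem hCinj
  have hmem1 : ∀ v, v ∈ L1 ↔ ∃ jd, c d1 jd = v := posList_mem hσ1inj
  have hmem2 : ∀ v, v ∈ L2 ↔ ∃ jd, c d2 jd = v := posList_mem hσ2inj
  have hClast : LC.getLast hCne = c i j := by
    refine (posList_getLast hCne).trans ?_
    show c i ((j + 1) + ((n i - 1 : ℕ) : ZMod (n i))) = c i j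
    rw [castNsub1 _ (by omega)]
    norm_num
  have hChead : LC.head hCne = c i (j + 1) := by
    refine (posList_head hCne).trans ?_
    show c i ((j + 1) + ((0 : ℕ) : ZMod (n i))) = c i (j + 1)
    norm_num
  have h1head : L1.head h1ne = c d1 (σ1 0) := posList_head _
  have h1last : L1.getLast h1ne = c d1 (σ1 (n d1 - 1)) := posList_getLast _
  have h2head : L2.head h2ne = c d2 (σ2 0) := posList_head _
  have h2last : L2.getLast h2ne = c d2 (σ2 (n d2 - 1)) := posList_getLast _
  have hdisjC1 : LC.Disjoint L1 := by
    intro a haC haD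
    obtain ⟨jj, hj⟩ := (hmemC a).mp haC
    obtain ⟨jd, hd2'⟩ := (hmem1 a).mp haD
    exact hd1i (hF.disj d1 i jd jj (hd2'.trans hj.symm))
  have hdisjC2 : LC.Disjoint L2 := by
    intro a haC haD
    obtain ⟨jj, hj⟩ := (hmemC a).mp haC
    obtain ⟨jd, hd2'⟩ := (hmem2 a).mp haD
    exact hd2i (hF.disj d2 i jd jj (hd2'.trans hj.symm))
  have hdisj12 : L1.Disjoint L2 := by
    intro a ha1 ha2
    obtain ⟨j1, hj1⟩ := (hmem1 a).mp ha1
    obtain ⟨j2, hj2⟩ := (hmem2 a).mp ha2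
    exact hd12 (hF.disj d1 d2 j1 j2 (hj1.trans hj2.symm))
  refine merge_contra hF hmin 3 (by omega) ![i, d1, d2] ?_ (LC ++ (L1 ++ L2)) ?_ ?_ ?_ hLne
    ?_ ?_ ?_
  · intro a b hab
    exact match a, b, hab with
    | 0, 0, _ => rfl
    | 0, 1, hab => absurd (show i = d1 from hab).symm hd1i
    | 0, 2, hab => absurd (show i = d2 from hab).symm hd2i
    | 1, 0, hab => absurd (show d1 = i from hab) hd1i
    | 1, 1, _ => rfl
    | 1, 2, hab => absurd (show d1 = d2 from hab) hd12
    | 2, 0, hab => absurd (show d2 = i from hab) hd2i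
    | 2, 1, hab => absurd (show d2 = d1 from hab) hd12.symm
    | 2, 2, _ => rfl
  · have : (LC ++ (L1 ++ L2)).length = n i + (n d1 + n d2) := by simp [hLC, hL1, hL2]
    omega
  · refine List.nodup_append'.mpr ⟨posList_nodup (hF.inj i) hCinj, ?_, ?_⟩
    · exact List.nodup_append'.mpr ⟨posList_nodup (hF.inj d1) hσ1inj,
        posList_nodup (hF.inj d2) hσ2inj, hdisj12⟩
    · intro a haC ha12
      rcases List.mem_append.mp ha12 with h | h
      · exact hdisjC1 haC h
      · exact hdisjC2 haC h
  · refine List.isChain_append.mpr ⟨posList_chain' (sfwd_adj hF i (j + 1)), ?_, ?_⟩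
    · refine List.isChain_append.mpr ⟨posList_chain' hσ1adj, posList_chain' hσ2adj, ?_⟩
      intro x hx y hy
      rw [List.getLast?_eq_getLast h1ne] at hx
      rw [List.head?_eq_head h2ne] at hy
      simp only [Option.mem_some_iff] at hx hy
      subst hx; subst hy
      rw [h1last, h2head]
      exact hseam
    · intro x hx y hy
      rw [List.getLast?_eq_getLast hCne] at hx
      rw [List.head?_eq_head h12ne] at hy
      simp only [Option.mem_some_iff] at hx hy
      subst hx; subst hy
      have e2 : (L1 ++ L2).head h12ne = L1.head h1ne := by
        rw [List.head_append]
        simp [h1ne]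
      rw [hClast, e2, h1head]
      exact hentry
  · have e1 : (LC ++ (L1 ++ L2)).getLast hLne = (L1 ++ L2).getLast h12ne := by
      rw [List.getLast_append]
      simp [h12ne]
    have e15 : (L1 ++ L2).getLast h12ne = L2.getLast h2ne := by
      rw [List.getLast_append]
      simp [h2ne]
    have e2 : (LC ++ (L1 ++ L2)).head hLne = LC.head hCne := by
      rw [List.head_append]
      simp [hCne]
    rw [e1, e15, e2, hChead, h2last]
    exact hexit
  · intro t jd
    fin_cases t
    · exact List.mem_append_left _ ((hmemC _).mpr ⟨jd, rfl⟩)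
    · exact List.mem_append_right _ (List.mem_append_left _ ((hmem1 _).mpr ⟨jd, rfl⟩))
    · exact List.mem_append_right _ (List.mem_append_right _ ((hmem2 _).mpr ⟨jd, rfl⟩))
  · intro v hv
    rcases List.mem_append.mp hv with h | h
    · obtain ⟨jj, hj⟩ := (hmemC v).mp h
      exact ⟨0, jj, hj⟩
    · rcases List.mem_append.mp h with h' | h'
      · obtain ⟨jd, hd'⟩ := (hmem1 v).mp h'
        exact ⟨1, jd, hd'⟩
      · obtain ⟨jd, hd'⟩ := (hmem2 v).mp h'
        exact ⟨2, jd, hd'⟩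

end Wrappers

end NAE

open NAE

theorem no_atype_edge (G : SimpleGraph V) (h2k2 : TwoK2Free G)
    (k : ℕ) (n : Fin k → ℕ) (c : ∀ i : Fin k, ZMod (n i) → V)
    (hF : CycleFamily G k n c)
    (hmin : ∀ (k' : ℕ) (n' : Fin k' → ℕ) (c' : ∀ i : Fin k', ZMod (n' i) → V),
      CycleFamily G k' n' c' → k ≤ k')
    (hk : 2 ≤ k) :
    ∀ (i : Fin k) (j : ZMod (n i)),
      ¬ (AType G c i (c i j) ∧ AType G c i (c i (j + 1))) := by
  rintro i j ⟨⟨d1, hd1i, p, hx1p, hx1p1⟩, ⟨d2, hd2i, s, hx2s, hx2s1⟩⟩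
  have cross_ne : ∀ (d : Fin k), d ≠ i → ∀ (jj : ZMod (n i)) (jz : ZMod (n d)),
      c i jj ≠ c d jz := by
    intro d hd jj jz h
    exact hd (hF.disj d i jz jj h.symm)
  by_cases hd : d1 = d2
  · -- same cycle
    subst hd
    have h3d := hF.three_le d1
    haveI : NeZero (n d1) := ⟨by omega⟩
    -- merge helpers
    have unswap : ∀ r : ZMod (n d1), G.Adj (c i j) (c d1 r) →
        G.Adj (c i (j + 1)) (c d1 (r + 1)) → False := by
      intro r h1 h2
      refine twomerge hF hmin i j d1 hd1i (fun t => r - (t : ZMod (n d1)))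
        (sbwd_adj hF d1 r) (sbwd_inj d1 r) (by simpa using h1) ?_
      beta_reduce
      rw [sbwd_last d1 r (by omega)]
      exact h2.symm
    have swap : ∀ r : ZMod (n d1), G.Adj (c i (j + 1)) (c d1 r) →
        G.Adj (c i j) (c d1 (r + 1)) → False := by
      intro r h2 h1
      refine twomerge hF hmin i j d1 hd1i (fun t => (r + 1) + (t : ZMod (n d1)))
        (sfwd_adj hF d1 (r + 1)) (sfwd_inj d1 (r + 1)) (by simpa using h1) ?_
      beta_reduce
      rw [sfwd_last d1 (r + 1) (by omega), add_sub_cancel_right]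
      exact h2.symm
    have twoarc : ∀ α s' : ZMod (n d1), s' + 1 ≠ α → G.Adj (c i j) (c d1 α) →
        G.Adj (c d1 s') (c d1 (α - 1)) → G.Adj (c i (j + 1)) (c d1 (s' + 1)) → False := by
      intro α s' hno hentry hseam hexit
      set ℓ1 : ℕ := (s' - α).val + 1 with hℓ1
      have hvlt := ZMod.val_lt (s' - α)
      have hcastval : (((s' - α).val : ℕ) : ZMod (n d1)) = s' - α :=
        ZMod.natCast_rightInverse _
      have hl1 : ℓ1 ≤ n d1 - 1 := by
        rcases Nat.lt_or_ge ((s' - α).val) (n d1 - 1) with hlt | hge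
        · omega
        · exfalso
          have hval : (s' - α).val = n d1 - 1 := by omega
          have heq : s' - α = ((n d1 - 1 : ℕ) : ZMod (n d1)) := by
            rw [← hval, hcastval]
          rw [castNsub1 _ (by omega)] at heq
          exact hno (by linear_combination heq)
      have e1 : α + ((ℓ1 - 1 : ℕ) : ZMod (n d1)) = s' := by
        have : ℓ1 - 1 = (s' - α).val := by omega
        rw [this, hcastval]
        ring
      have e2 : α + ((ℓ1 : ℕ) : ZMod (n d1)) = s' + 1 := by
        rw [hℓ1]
        push_cast [hcastval]
        ring
      refine twomerge hF hmin i j d1 hd1i (stwo d1 α ℓ1)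
        (stwo_adj hF d1 α ℓ1 (by omega) hl1 (by rw [e1]; exact hseam))
        (stwo_inj d1 α ℓ1 (by omega) hl1 (by omega)) ?_ ?_
      · rw [stwo_zero d1 α ℓ1 (by omega)]
        exact hentry
      · rw [stwo_last d1 α ℓ1 (by omega) hl1 (by omega), e2]
        exact hexit.symm
    by_cases hsp : s = p
    · subst hsp
      exact unswap s hx1p hx2s1
    by_cases hsp1 : s + 1 = p
    · refine swap s hx2s ?_
      rw [hsp1]
      exact hx1p
    have hedge : G.Adj (c d1 (p - 1)) (c d1 p) := by
      have h := hF.adj d1 (p - 1)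
      rwa [sub_add_cancel] at h
    have hne1 : s ≠ p - 1 := by
      intro h
      apply hsp1
      rw [h]
      exact sub_add_cancel p 1
    obtain h | h | h | h := two_k2 h2k2 hx2s hedge
      (cross_ne d1 hd1i (j + 1) (p - 1)) (cross_ne d1 hd1i (j + 1) p)
      (fun h => hne1 (hF.inj d1 h)) (fun h => hsp (hF.inj d1 h))
    · refine swap (p - 1) h ?_
      rw [sub_add_cancel]
      exact hx1p
    · exact swap p h hx1p1
    · exact twoarc p s hsp1 hx1p h hx2s1
    · refine twoarc (p + 1) s (fun hh => hsp (add_right_cancel hh)) hx1p1 ?_ hx2s1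
      rw [add_sub_cancel_right]
      exact h
  · -- different cycles
    have h3d1 := hF.three_le d1
    have h3d2 := hF.three_le d2
    haveI : NeZero (n d1) := ⟨by omega⟩
    haveI : NeZero (n d2) := ⟨by omega⟩
    have cross12 : ∀ (j1 : ZMod (n d1)) (j2 : ZMod (n d2)), c d1 j1 ≠ c d2 j2 := by
      intro j1 j2 h
      exact hd (hF.disj d1 d2 j1 j2 h)
    obtain h | h | h | h := two_k2 h2k2 (hF.adj d1 p) (hF.adj d2 s)
      (cross12 p s) (cross12 p (s + 1)) (cross12 (p + 1) s) (cross12 (p + 1) (s + 1))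
    · refine threemerge hF hmin i j d1 d2 hd1i hd2i hd
        (fun t => (p + 1) + (t : ZMod (n d1))) (fun t => s - (t : ZMod (n d2)))
        (sfwd_adj hF d1 (p + 1)) (sfwd_inj d1 (p + 1))
        (sbwd_adj hF d2 s) (sbwd_inj d2 s)
        (by simpa using hx1p1) ?_ ?_
      · beta_reduce
        rw [sfwd_last d1 (p + 1) (by omega), add_sub_cancel_right]
        simpa using h
      · beta_reduce
        rw [sbwd_last d2 s (by omega)]
        exact hx2s1.symm
    · refine threemerge hF hmin i j d1 d2 hd1i hd2i hd
        (fun t => (p + 1) + (t : ZMod (n d1))) (fun t => (s + 1) + (t : ZMod (n d2)))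
        (sfwd_adj hF d1 (p + 1)) (sfwd_inj d1 (p + 1))
        (sfwd_adj hF d2 (s + 1)) (sfwd_inj d2 (s + 1))
        (by simpa using hx1p1) ?_ ?_
      · beta_reduce
        rw [sfwd_last d1 (p + 1) (by omega), add_sub_cancel_right]
        simpa using h
      · beta_reduce
        rw [sfwd_last d2 (s + 1) (by omega), add_sub_cancel_right]
        exact hx2s.symm
    · refine threemerge hF hmin i j d1 d2 hd1i hd2i hd
        (fun t => p - (t : ZMod (n d1))) (fun t => s - (t : ZMod (n d2)))
        (sbwd_adj hF d1 p) (sbwd_inj d1 p)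
        (sbwd_adj hF d2 s) (sbwd_inj d2 s)
        (by simpa using hx1p) ?_ ?_
      · beta_reduce
        rw [sbwd_last d1 p (by omega)]
        simpa using h
      · beta_reduce
        rw [sbwd_last d2 s (by omega)]
        exact hx2s1.symm
    · refine threemerge hF hmin i j d1 d2 hd1i hd2i hd
        (fun t => p - (t : ZMod (n d1))) (fun t => (s + 1) + (t : ZMod (n d2)))
        (sbwd_adj hF d1 p) (sbwd_inj d1 p)
        (sfwd_adj hF d2 (s + 1)) (sfwd_inj d2 (s + 1))
        (by simpa using hx1p) ?_ ?_
      · beta_reduce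
        rw [sbwd_last d1 p (by omega)]
        simpa using h
      · beta_reduce
        rw [sfwd_last d2 (s + 1) (by omega), add_sub_cancel_right]
        exact hx2s.symm
end

section
/- Let G be a graph with a 2-factor whose cycle family F has at least two cycles, and suppose every edge of every cycle of F has exactly one A-type endpoint (i.e., every cycle is AB-alternating). Then the toughness of G is at most 1. -/
open SimpleGraph

variable {V : Type*}

theorem ab_alternating_tough_le_one [Fintype V] (G : SimpleGraph V)
    (k : ℕ) (n : Fin k → ℕ) (c : ∀ i : Fin k, ZMod (n i) → V)
    (hF : CycleFamily G k n c)
    (hk : 2 ≤ k)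
    (halt : ∀ (i : Fin k) (j : ZMod (n i)), AType G c i (c i j) ↔ ¬ AType G c i (c i (j + 1)))
    (hAplus : IndepSet G
      {v | ∃ (i : Fin k) (j : ZMod (n i)), AType G c i (c i j) ∧ v = c i (j + 1)}) :
    ∀ t : ℝ, Tough t G → t ≤ 1 := by
  intro t ht
  classical
  set S : Set V := {v | ∃ i j, c i j = v ∧ AType G c i v} with hSdef
  have memS : ∀ (i : Fin k) (j : ZMod (n i)), c i j ∈ S ↔ AType G c i (c i j) := by
    intro i j
    constructor
    · rintro ⟨i', j', hc, hA⟩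
      have hii : i' = i := hF.disj i' i j' j hc
      subst hii
      exact hA
    · intro hA
      exact ⟨i, j, rfl, hA⟩
  -- every vertex not in S lies in the A⁺ set
  have hcompl : ∀ v ∈ Sᶜ,
      v ∈ {v | ∃ (i : Fin k) (j : ZMod (n i)), AType G c i (c i j) ∧ v = c i (j + 1)} := by
    intro v hv
    obtain ⟨i, j, rfl⟩ := hF.spanning v
    have hnA : ¬ AType G c i (c i j) := fun h => hv ((memS i j).mpr h)
    have hA : AType G c i (c i (j - 1)) := by
      have := (halt i (j - 1))
      rw [sub_add_cancel] at this
      exact this.mpr hnA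
    exact ⟨i, j - 1, hA, by rw [sub_add_cancel]⟩
  -- the induced graph on Sᶜ is edgeless
  have hedgeless : ∀ a b : ↥(Sᶜ), ¬ (G.induce Sᶜ).Adj a b := by
    intro a b hab
    have hGab : G.Adj (a : V) (b : V) := hab
    exact hAplus (hcompl a a.2) (hcompl b b.2) hGab.ne hGab
  -- components of G - S are exactly the vertices of Sᶜ
  have hcomp : compCount G S = Sᶜ.ncard := by
    rw [← Nat.card_coe_set_eq]
    unfold compCount
    refine (Nat.card_eq_of_bijective
      (fun v : ↥(Sᶜ) => (G.induce Sᶜ).connectedComponentMk v) ⟨?_, ?_⟩).symm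
    · intro a b hab
      have hr : (G.induce Sᶜ).Reachable a b := SimpleGraph.ConnectedComponent.eq.mp hab
      obtain ⟨w⟩ := hr
      cases w with
      | nil => rfl
      | cons h _ => exact absurd h (hedgeless _ _)
    · intro x
      obtain ⟨v, rfl⟩ := x.exists_rep
      exact ⟨v, rfl⟩
  -- injection from S into Sᶜ
  choose fi fj hf using hF.spanning
  have shift_inj : Function.Injective
      (fun p : (Σ i : Fin k, ZMod (n i)) => c p.1 (p.2 + 1)) := by
    rintro ⟨i, a⟩ ⟨i', b⟩ h
    simp only at h
    have hii : i = i' := hF.disj _ _ _ _ h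
    subst hii
    have hab : a + 1 = b + 1 := hF.inj i h
    have : a = b := add_right_cancel hab
    subst this
    rfl
  have hcard : S.ncard ≤ Sᶜ.ncard := by
    apply Set.ncard_le_ncard_of_injOn (fun v => c (fi v) (fj v + 1))
    · intro v hv
      have hv2 : AType G c (fi v) (c (fi v) (fj v)) := by
        rw [hf v]
        obtain ⟨i, j, hc, hA⟩ := hv
        have hii : i = fi v := hF.disj i (fi v) j (fj v) (by rw [hc, hf v])
        subst hii
        exact hA
      have hn := (halt (fi v) (fj v)).mp hv2
      exact fun h => hn ((memS (fi v) (fj v + 1)).mp h)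
    · intro v hv w hw hvw
      have hs : (⟨fi v, fj v⟩ : Σ i : Fin k, ZMod (n i)) = ⟨fi w, fj w⟩ :=
        shift_inj hvw
      rw [← hf v, ← hf w]
      exact congrArg (fun p : Σ i : Fin k, ZMod (n i) => c p.1 p.2) hs
  -- Sᶜ has at least two elements
  have hB : ∀ i : Fin k, ∃ j, c i j ∈ Sᶜ := by
    intro i
    by_cases h : AType G c i (c i 0)
    · exact ⟨0 + 1, fun hm => (halt i 0).mp h ((memS i (0 + 1)).mp hm)⟩
    · exact ⟨0, fun hm => h ((memS i 0).mp hm)⟩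
  have hk0 : (0 : ℕ) < k := by omega
  have hk1 : (1 : ℕ) < k := by omega
  obtain ⟨j0, hj0⟩ := hB ⟨0, hk0⟩
  obtain ⟨j1, hj1⟩ := hB ⟨1, hk1⟩
  have hne : c ⟨0, hk0⟩ j0 ≠ c ⟨1, hk1⟩ j1 := by
    intro h
    have := hF.disj _ _ _ _ h
    simp [Fin.ext_iff] at this
  have h2 : 2 ≤ Sᶜ.ncard := by
    have hsub : {c ⟨0, hk0⟩ j0, c ⟨1, hk1⟩ j1} ⊆ Sᶜ := by
      intro x hx
      rcases hx with h | h <;> subst h <;> assumption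
    calc 2 = ({c ⟨0, hk0⟩ j0, c ⟨1, hk1⟩ j1} : Set V).ncard := (Set.ncard_pair hne).symm
    _ ≤ Sᶜ.ncard := Set.ncard_le_ncard hsub (Set.toFinite _)
  have htough := ht S (by rw [hcomp]; exact h2)
  rw [hcomp] at htough
  have hle : (S.ncard : ℝ) ≤ (Sᶜ.ncard : ℝ) := by exact_mod_cast hcard
  have h2' : (2 : ℝ) ≤ (Sᶜ.ncard : ℝ) := by exact_mod_cast h2
  nlinarith
end

section
/- Let G be a 2K2-free graph with a 2-factor whose cycle family F has at least two cycles C and D (with |V(C)| ≤ |V(D)|), and suppose C contains a B-type edge xy with the property that the set I of vertices outside C adjacent to neither x nor y is an independent set of size |V(G)−V(C)|/2. Then the toughness of G is strictly less than 3. -/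
open SimpleGraph

variable {V : Type*}

/-- If the induced graph on `Sᶜ` has no edges, every component is a singleton. -/
lemma compCount_of_indep [Fintype V] (G : SimpleGraph V) (S : Set V)
    (h : ∀ a b : V, a ∈ Sᶜ → b ∈ Sᶜ → ¬ G.Adj a b) :
    compCount G S = (Sᶜ).ncard := by
  have hbot : G.induce Sᶜ = ⊥ := by
    ext a b
    simp only [SimpleGraph.comap_adj, SimpleGraph.bot_adj, iff_false]
    exact h a b a.2 b.2
  rw [compCount, hbot, ← Nat.card_coe_set_eq]
  refine (Nat.card_eq_of_bijective
    (⊥ : SimpleGraph (Sᶜ : Set V)).connectedComponentMk ⟨?_, ?_⟩).symm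
  · intro a b hab
    exact SimpleGraph.reachable_bot.mp (SimpleGraph.ConnectedComponent.exact hab)
  · exact Quot.exists_rep

theorem two_btype_cycles_tough_lt_three [Fintype V] (G : SimpleGraph V)
    (h2k2 : TwoK2Free G)
    (k : ℕ) (n : Fin k → ℕ) (c : ∀ i : Fin k, ZMod (n i) → V)
    (hF : CycleFamily G k n c)
    (hk : 2 ≤ k) (iC iD : Fin k) (hne : iC ≠ iD) (hle : n iC ≤ n iD) (x : ZMod (n iC))
    (hxB : ¬ AType G c iC (c iC x)) (hyB : ¬ AType G c iC (c iC (x + 1)))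
    (hI : IndepSet G
      {v | (∀ j, c iC j ≠ v) ∧ ¬ G.Adj (c iC x) v ∧ ¬ G.Adj (c iC (x + 1)) v})
    (hsize : 2 * {v | (∀ j, c iC j ≠ v) ∧ ¬ G.Adj (c iC x) v ∧
        ¬ G.Adj (c iC (x + 1)) v}.ncard = Fintype.card V - n iC) :
    ¬ Tough 3 G := by
  have hNC3 : 3 ≤ n iC := hF.three_le iC
  have hND3 : 3 ≤ n iD := hF.three_le iD
  haveI : NeZero (n iC) := ⟨by omega⟩
  haveI : NeZero (n iD) := ⟨by omega⟩
  set I : Set V := {v | (∀ j, c iC j ≠ v) ∧ ¬ G.Adj (c iC x) v ∧ ¬ G.Adj (c iC (x + 1)) v}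
    with hIdef
  set X : V := c iC x with hX
  have hXnotI : X ∉ I := fun h => h.1 x rfl
  -- `|V| ≥ n iC + n iD`
  have hrange : ∀ i : Fin k, n i ≠ 0 → (Set.range (c i)).ncard = n i := by
    intro i hi
    rw [← Nat.card_coe_set_eq, Nat.card_range_of_injective (hF.inj i), Nat.card_zmod]
  have hdisj : Disjoint (Set.range (c iC)) (Set.range (c iD)) := by
    rw [Set.disjoint_left]
    rintro v ⟨j, rfl⟩ ⟨j', hj'⟩
    exact hne (hF.disj iC iD j j' hj'.symm)
  have hNbig : n iC + n iD ≤ Fintype.card V := by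
    have h1 := Set.ncard_le_ncard (Set.subset_univ
      (Set.range (c iC) ∪ Set.range (c iD))) Set.finite_univ
    rw [Set.ncard_univ, Nat.card_eq_fintype_card,
      Set.ncard_union_eq hdisj (Set.toFinite _) (Set.toFinite _),
      hrange iC (by omega), hrange iD (by omega)] at h1
    exact h1
  -- the cut set
  intro hT
  set S : Set V := (insert X I)ᶜ with hS
  have hScompl : Sᶜ = insert X I := compl_compl _
  have hindep : ∀ a b : V, a ∈ Sᶜ → b ∈ Sᶜ → ¬ G.Adj a b := by
    rw [hScompl]
    rintro a b (rfl | ha) (rfl | hb) hab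
    · exact G.irrefl hab
    · exact hb.2.1 hab
    · exact ha.2.1 hab.symm
    · rcases eq_or_ne a b with rfl | hne'
      · exact G.irrefl hab
      · exact hI ha hb hne' hab
  have hcomp : compCount G S = I.ncard + 1 := by
    rw [compCount_of_indep G S hindep, hScompl, Set.ncard_insert_of_notMem hXnotI]
  have hcard : (insert X I).ncard + S.ncard = Fintype.card V := by
    rw [hS, ← Nat.card_eq_fintype_card]
    exact Set.ncard_add_ncard_compl _
  rw [Set.ncard_insert_of_notMem hXnotI] at hcard
  have hm2 : 2 ≤ compCount G S := by rw [hcomp]; omega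
  have := hT S hm2
  rw [hcomp] at this
  have hnat : 3 * (I.ncard + 1) ≤ S.ncard := by exact_mod_cast this
  omega
end

section
/- Let G be a 2K2-free graph and uv an edge of G such that u and v together have at most 2(|V(G)|−1)/3 neighbors (counting u,v themselves among neighbors as appropriate). Then the set of vertices nonadjacent to both u and v is an independent set of size more than |V(G)|/3 − 1, and consequently τ(G) < 2. -/
open SimpleGraph

variable {V : Type*}

lemma compCount_of_no_edges [Fintype V] (G : SimpleGraph V) (S : Set V)
    (h : ∀ a b : (Sᶜ : Set V), ¬ (G.induce Sᶜ).Adj a b) :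
    compCount G S = (Sᶜ : Set V).ncard := by
  rw [compCount, ← Nat.card_coe_set_eq]
  symm
  apply Nat.card_eq_of_bijective ((G.induce Sᶜ).connectedComponentMk)
  constructor
  · intro a b hab
    obtain ⟨w⟩ := (SimpleGraph.ConnectedComponent.eq).mp hab
    cases w with
    | nil => rfl
    | cons h' p => exact absurd h' (h _ _)
  · exact Quot.exists_rep

theorem edge_few_neighbors_tough_lt_two [Fintype V] (G : SimpleGraph V)
    (h2k2 : TwoK2Free G) (u v : V) (huv : G.Adj u v)
    (hnb : ((G.neighborSet u ∪ G.neighborSet v).ncard : ℝ) ≤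
      2 * ((Fintype.card V : ℝ) - 1) / 3) :
    IndepSet G {w | w ≠ u ∧ w ≠ v ∧ ¬ G.Adj u w ∧ ¬ G.Adj v w} ∧
      (Fintype.card V : ℝ) / 3 - 1 <
        (({w | w ≠ u ∧ w ≠ v ∧ ¬ G.Adj u w ∧ ¬ G.Adj v w} : Set V).ncard : ℝ) ∧
      ¬ Tough 2 G := by
  classical
  set N : Set V := G.neighborSet u ∪ G.neighborSet v with hN
  set I : Set V := {w | w ≠ u ∧ w ≠ v ∧ ¬ G.Adj u w ∧ ¬ G.Adj v w} with hI
  have huv' : u ≠ v := G.ne_of_adj huv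
  have hIN : I = Nᶜ := by
    ext w
    simp only [hI, hN, Set.mem_setOf_eq, Set.mem_compl_iff, Set.mem_union,
      SimpleGraph.mem_neighborSet, not_or]
    constructor
    · rintro ⟨_, _, h1, h2⟩; exact ⟨h1, h2⟩
    · rintro ⟨h1, h2⟩
      refine ⟨?_, ?_, h1, h2⟩
      · rintro rfl; exact h2 (G.adj_symm huv)
      · rintro rfl; exact h1 huv
  have hind : I.Pairwise fun a b => ¬ G.Adj a b := by
    intro a ha b hb hab hadj
    exact h2k2 ⟨u, v, a, b, huv', ha.1.symm, hb.1.symm, ha.2.1.symm, hb.2.1.symm,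
      hab, huv, hadj, ha.2.2.1, hb.2.2.1, ha.2.2.2, hb.2.2.2⟩
  have hcardIN : I.ncard + N.ncard = Fintype.card V := by
    rw [hIN, add_comm, Set.ncard_add_ncard_compl, Nat.card_eq_fintype_card]
  have hn2 : 2 ≤ Fintype.card V := Fintype.one_lt_card_iff_nontrivial.mpr ⟨u, v, huv'⟩
  have hcast : (I.ncard : ℝ) + (N.ncard : ℝ) = (Fintype.card V : ℝ) := by
    exact_mod_cast congrArg (Nat.cast (R := ℝ)) hcardIN
  have hIsize : (Fintype.card V : ℝ) / 3 - 1 < (I.ncard : ℝ) := by linarith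
  have hI1 : 1 ≤ I.ncard := by
    by_contra h
    push_neg at h
    interval_cases hi : I.ncard <;> simp_all <;>
      linarith [(by exact_mod_cast hn2 : (2:ℝ) ≤ (Fintype.card V:ℝ))]
  refine ⟨hind, hIsize, ?_⟩
  intro hT
  set S : Set V := N \ {u} with hS
  have huN : u ∈ N := Or.inr (G.adj_symm huv)
  have huI : u ∉ I := fun h => h.1 rfl
  have hScompl : Sᶜ = insert u I := by
    rw [hIN, hS]
    ext w
    simp only [Set.mem_compl_iff, Set.mem_diff, Set.mem_singleton_iff, Set.mem_insert_iff,
      not_and, not_not]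
    tauto
  have hnoedge : ∀ a b : (Sᶜ : Set V), ¬ (G.induce Sᶜ).Adj a b := by
    rintro ⟨a, ha⟩ ⟨b, hb⟩ hadj
    have hab : G.Adj a b := hadj
    rw [hScompl] at ha hb
    rcases ha with rfl | ha
    · rcases hb with rfl | hb
      · exact G.irrefl hab
      · exact hb.2.2.1 hab
    · rcases hb with rfl | hb
      · exact ha.2.2.1 (G.adj_symm hab)
      · exact hind ha hb (G.ne_of_adj hab) hab
  have hcc : compCount G S = I.ncard + 1 := by
    rw [compCount_of_no_edges G S hnoedge, hScompl, Set.ncard_insert_of_notMem huI]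
  have hSN : S.ncard + 1 = N.ncard := Set.ncard_diff_singleton_add_one huN
  have h2cc : 2 ≤ compCount G S := by omega
  have := hT S h2cc
  rw [hcc] at this
  have hcastS : (S.ncard : ℝ) + 1 = (N.ncard : ℝ) := by
    exact_mod_cast congrArg (Nat.cast (R := ℝ)) hSN
  push_cast at this
  linarith
end

section
/- Let G be a graph, C a cycle in G, v a vertex of C, and P a Hamiltonian path of C from v to x (a path in G using exactly the vertices of C with endpoints v and x). Let D be a cycle vertex-disjoint from C with an edge u u⁺ such that x is adjacent to u and v is adjacent to u⁺. Then G contains a cycle with vertex set exactly V(C) ∪ V(D). -/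
open SimpleGraph

variable {V : Type*}

theorem path_plus_cycle_merge (G : SimpleGraph V) (m q : ℕ) (hm : 3 ≤ m) (hq : 3 ≤ q)
    (cC : ZMod m → V) (cD : ZMod q → V)
    (hCinj : Function.Injective cC) (hDinj : Function.Injective cD)
    (hCadj : ∀ i, G.Adj (cC i) (cC (i + 1))) (hDadj : ∀ j, G.Adj (cD j) (cD (j + 1)))
    (hdisj : Disjoint (Set.range cC) (Set.range cD))
    (P : Fin m → V) (hPinj : Function.Injective P)
    (hPrange : Set.range P = Set.range cC)
    (hPadj : ∀ i : ℕ, ∀ h : i + 1 < m, G.Adj (P ⟨i, by omega⟩) (P ⟨i + 1, h⟩))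
    (v x : V) (hv : P ⟨0, by omega⟩ = v) (hx : P ⟨m - 1, by omega⟩ = x)
    (j : ZMod q) (hxu : G.Adj x (cD j)) (hvu : G.Adj v (cD (j + 1))) :
    ∃ (r : ℕ) (e : ZMod r → V), 3 ≤ r ∧ Function.Injective e ∧
      (∀ l, G.Adj (e l) (e (l + 1))) ∧ Set.range e = Set.range cC ∪ Set.range cD := by
  haveI : NeZero q := ⟨by omega⟩
  haveI : NeZero (m + q) := ⟨by omega⟩
  haveI : Fact (1 < m + q) := ⟨by omega⟩
  set e : ZMod (m + q) → V := fun l =>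
    if h : l.val < m then P ⟨l.val, h⟩ else cD (j - ((l.val - m : ℕ) : ZMod q)) with he
  have hvallt : ∀ l : ZMod (m + q), l.val < m + q := fun l => ZMod.val_lt l
  have hvaladd : ∀ l : ZMod (m + q), (l + 1).val = (l.val + 1) % (m + q) := by
    intro l; rw [ZMod.val_add, ZMod.val_one]
  refine ⟨m + q, e, by omega, ?_, ?_, ?_⟩
  · -- injectivity
    intro a b hab
    by_cases ha : a.val < m <;> by_cases hb : b.val < m
    · rw [he] at hab; simp only [dif_pos ha, dif_pos hb] at hab
      exact ZMod.val_injective _ (congrArg Fin.val (hPinj hab))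
    · exfalso
      rw [he] at hab; simp only [dif_pos ha, dif_neg hb] at hab
      have h1 : P ⟨a.val, ha⟩ ∈ Set.range cC := hPrange ▸ Set.mem_range_self _
      exact Set.disjoint_left.mp hdisj h1 (hab ▸ Set.mem_range_self _)
    · exfalso
      rw [he] at hab; simp only [dif_neg ha, dif_pos hb] at hab
      have h1 : P ⟨b.val, hb⟩ ∈ Set.range cC := hPrange ▸ Set.mem_range_self _
      exact Set.disjoint_left.mp hdisj h1 (hab ▸ Set.mem_range_self _)
    · rw [he] at hab; simp only [dif_neg ha, dif_neg hb] at hab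
      have h1 := sub_right_injective (hDinj hab)
      have h2 : a.val - m = b.val - m := by
        have := congrArg ZMod.val h1
        rwa [ZMod.val_cast_of_lt (by have := hvallt a; omega),
          ZMod.val_cast_of_lt (by have := hvallt b; omega)] at this
      exact ZMod.val_injective _ (by omega)
  · -- adjacency
    intro l
    have hl := hvallt l
    have hadd := hvaladd l
    rcases lt_trichotomy (l.val + 1) m with h1 | h1 | h1
    · have h2 : (l + 1).val = l.val + 1 := by rw [hadd, Nat.mod_eq_of_lt (by omega)]
      rw [he]; simp only [dif_pos (show l.val < m by omega), h2, dif_pos h1]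
      exact hPadj l.val h1
    · have h2 : (l + 1).val = m := by rw [hadd, Nat.mod_eq_of_lt (by omega)]; omega
      rw [he]; simp only [dif_pos (show l.val < m by omega), h2,
        dif_neg (lt_irrefl m), Nat.sub_self, Nat.cast_zero, sub_zero]
      have : (⟨l.val, by omega⟩ : Fin m) = ⟨m - 1, by omega⟩ := by
        apply Fin.ext; simp; omega
      rw [this, hx]; exact hxu
    · by_cases h3 : l.val + 1 < m + q
      · have h2 : (l + 1).val = l.val + 1 := by rw [hadd, Nat.mod_eq_of_lt (by omega)]
        rw [he]; simp only [dif_neg (show ¬ l.val < m by omega), h2,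
          dif_neg (show ¬ l.val + 1 < m by omega)]
        have hc : ((l.val + 1 - m : ℕ) : ZMod q) = ((l.val - m : ℕ) : ZMod q) + 1 := by
          have : l.val + 1 - m = (l.val - m) + 1 := by omega
          rw [this]; push_cast; ring
        rw [hc]
        have := (hDadj (j - (((l.val - m : ℕ) : ZMod q) + 1))).symm
        have harith : j - (((l.val - m : ℕ) : ZMod q) + 1) + 1 = j - ((l.val - m : ℕ) : ZMod q) := by
          ring
        rw [harith] at this; exact this
      · have hval : l.val = m + q - 1 := by omega
        have h2 : (l + 1).val = 0 := by
          rw [hadd]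
          have hmq : l.val + 1 = m + q := by omega
          rw [hmq, Nat.mod_self]
        rw [he]; simp only [hval, dif_neg (show ¬ m + q - 1 < m by omega), h2,
          dif_pos (show 0 < m by omega)]
        have hc : ((m + q - 1 - m : ℕ) : ZMod q) = -1 := by
          have : m + q - 1 - m = q - 1 := by omega
          rw [this]
          have : ((q - 1 : ℕ) : ZMod q) = (q : ZMod q) - 1 := by
            have hq1 : (1:ℕ) ≤ q := by omega
            push_cast [hq1]; ring
          rw [this, ZMod.natCast_self]; ring
        rw [hc, sub_neg_eq_add, hv]
        exact hvu.symm
  · -- range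
    ext y
    constructor
    · rintro ⟨l, rfl⟩
      rw [he]
      by_cases h : l.val < m
      · simp only [dif_pos h]
        exact Or.inl (hPrange ▸ Set.mem_range_self _)
      · simp only [dif_neg h]
        exact Or.inr (Set.mem_range_self _)
    · rintro (hy | ⟨t, rfl⟩)
      · rw [← hPrange] at hy
        obtain ⟨i, rfl⟩ := hy
        refine ⟨((i : ℕ) : ZMod (m + q)), ?_⟩
        have hval : (((i : ℕ) : ZMod (m + q))).val = (i : ℕ) :=
          ZMod.val_cast_of_lt (by omega)
        rw [he]; simp only [hval, dif_pos i.isLt]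
      · set s := (j - t).val with hs
        have hslt : s < q := ZMod.val_lt _
        refine ⟨((m + s : ℕ) : ZMod (m + q)), ?_⟩
        have hval : (((m + s : ℕ) : ZMod (m + q))).val = m + s :=
          ZMod.val_cast_of_lt (by omega)
        rw [he]; simp only [hval, dif_neg (show ¬ m + s < m by omega)]
        have : ((m + s - m : ℕ) : ZMod q) = j - t := by
          have : m + s - m = s := by omega
          rw [this, hs, ZMod.natCast_val, ZMod.cast_id]
        rw [this, sub_sub_cancel]
end
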